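/- Under the Distflow recursion with each V_j viewed as a function v_j of the initial voltage V_0 > 0, if V_N ≤ 2V_0 then the derivatives satisfy 0 ≤ dv_j/dV_0 ≤ 1 for all j = 0,…,N. -/

import Mathlib

/-- Viewing each Distflow voltage `V_j` as a function `v j` of the initial voltage `V₀ > 0`,
if `v N V₀ ≤ 2 V₀` then `0 ≤ (v j)'(V₀) ≤ 1` for all `j = 0, …, N`. -/
theorem distflow_voltage_derivative_bounds (N : ℕ)
    (r : ℝ) (hr : 0 ≤ r) (p : ℕ → ℝ) (hp : ∀ j, 0 ≤ p j)
    (v : ℕ → ℝ → ℝ)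
    (hv0 : ∀ x > (0:ℝ), v 0 x = x)
    (hv1 : ∀ x > (0:ℝ), v 1 x = x + r * p 0 / x)
    (hrec : ∀ j, 1 ≤ j → j ≤ N - 1 → ∀ x > (0:ℝ),
      v (j + 1) x = 2 * v j x - v (j - 1) x + r * p j / v j x)
    (hdiff : ∀ j ≤ N, DifferentiableOn ℝ (v j) (Set.Ioi (0:ℝ)))
    (V₀ : ℝ) (hV₀ : 0 < V₀)
    (hdrop : v N V₀ ≤ 2 * V₀) :
    ∀ j ≤ N, 0 ≤ deriv (v j) V₀ ∧ deriv (v j) V₀ ≤ 1 := by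
  -- positivity, lower bound by x, and adjacent monotonicity
  have key : ∀ x > (0:ℝ), ∀ j ≤ N, 0 < v j x ∧ x ≤ v j x ∧
      (1 ≤ j → v (j-1) x ≤ v j x) := by
    intro x hx j
    induction j with
    | zero =>
      intro _
      rw [hv0 x hx]
      exact ⟨hx, le_refl x, by omega⟩
    | succ k ih =>
      intro hkN
      obtain ⟨hpos, hge, hmon⟩ := ih (by omega)
      rcases k with _ | m
      · rw [hv1 x hx]
        have h0 : 0 ≤ r * p 0 / x := div_nonneg (mul_nonneg hr (hp 0)) hx.le
        refine ⟨by linarith, by linarith, fun _ => ?_⟩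
        simpa [hv0 x hx] using (by linarith : x ≤ x + r * p 0 / x)
      · have hrec' := hrec (m+1) (by omega) (by omega) x hx
        have hd : 0 ≤ r * p (m+1) / v (m+1) x := div_nonneg (mul_nonneg hr (hp (m+1))) hpos.le
        have hmon' := hmon (by omega)
        simp only [Nat.add_sub_cancel] at hrec' hmon' ⊢
        rw [hrec']
        exact ⟨by linarith, by linarith, fun _ => by linarith⟩
  -- monotone chain up to N
  have chain : ∀ k ≤ N, ∀ j ≤ k, v j V₀ ≤ v k V₀ := by
    intro k
    induction k with
    | zero => intro _ j hj; interval_cases j; exact le_refl _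
    | succ m ih =>
      intro hm j hj
      rcases Nat.lt_or_ge j (m+1) with h | h
      · have h1 := (key V₀ hV₀ (m+1) hm).2.2 (by omega)
        simp only [Nat.add_sub_cancel] at h1
        exact le_trans (ih (by omega) j (by omega)) h1
      · have : j = m + 1 := by omega
        rw [this]
  have hle2 : ∀ j ≤ N, v j V₀ ≤ 2 * V₀ :=
    fun j hj => le_trans (chain N le_rfl j hj) hdrop
  -- differentiability at V₀
  have hda : ∀ j ≤ N, HasDerivAt (v j) (deriv (v j) V₀) V₀ := by
    intro j hj
    exact (((hdiff j hj) V₀ (Set.mem_Ioi.2 hV₀)).differentiableAt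
      (Ioi_mem_nhds hV₀)).hasDerivAt
  -- deriv of v 0
  have d0 : deriv (v 0) V₀ = 1 := by
    have heq : v 0 =ᶠ[nhds V₀] fun x => x := by
      filter_upwards [Ioi_mem_nhds hV₀] with x hx using hv0 x hx
    rw [heq.deriv_eq]
    exact deriv_id V₀
  -- deriv of v 1
  have d1 : deriv (v 1) V₀ = 1 - r * p 0 / V₀^2 := by
    have h : HasDerivAt (fun x : ℝ => x + r * p 0 / x)
        (1 + (0 * V₀ - r * p 0 * 1) / V₀^2) V₀ :=
      (hasDerivAt_id V₀).add
        ((hasDerivAt_const V₀ (r * p 0)).div (hasDerivAt_id V₀) hV₀.ne')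
    have heq : v 1 =ᶠ[nhds V₀] fun x => x + r * p 0 / x := by
      filter_upwards [Ioi_mem_nhds hV₀] with x hx using hv1 x hx
    rw [heq.deriv_eq, h.deriv]
    ring
  -- derivative recursion
  have drec : ∀ j, 1 ≤ j → j + 1 ≤ N →
      deriv (v (j+1)) V₀ = 2 * deriv (v j) V₀ - deriv (v (j-1)) V₀
        - r * p j * deriv (v j) V₀ / (v j V₀)^2 := by
    intro j hj hjN
    have hvj : v j V₀ ≠ 0 := (key V₀ hV₀ j (by omega)).1.ne'
    have hq : HasDerivAt (fun x => 2 * v j x - v (j-1) x + r * p j / v j x)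
        (2 * deriv (v j) V₀ - deriv (v (j-1)) V₀
          + (0 * v j V₀ - r * p j * deriv (v j) V₀) / (v j V₀)^2) V₀ :=
      (((hda j (by omega)).const_mul 2).sub (hda (j-1) (by omega))).add
        ((hasDerivAt_const V₀ (r * p j)).div (hda j (by omega)) hvj)
    have heq : v (j+1) =ᶠ[nhds V₀]
        fun x => 2 * v j x - v (j-1) x + r * p j / v j x := by
      filter_upwards [Ioi_mem_nhds hV₀] with x hx using hrec j hj (by omega) x hx
    rw [heq.deriv_eq, hq.deriv]
    ring
  -- main induction on derivative bounds
  have main : ∀ j, 1 ≤ j → j ≤ N →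
      deriv (v j) V₀ ≤ deriv (v (j-1)) V₀ ∧
      deriv (v (j-1)) V₀ - deriv (v j) V₀ ≤ (v j V₀ - v (j-1) V₀) / V₀ ∧
      deriv (v j) V₀ ≤ 1 ∧
      1 - (v j V₀ - V₀) / V₀ ≤ deriv (v j) V₀ := by
    intro j
    induction j with
    | zero => omega
    | succ k ih =>
      intro _ hkN
      rcases k with _ | m
      · -- j = 1
        have hv1' : v 1 V₀ = V₀ + r * p 0 / V₀ := hv1 V₀ hV₀
        have hv0' : v 0 V₀ = V₀ := hv0 V₀ hV₀
        have e1 : (v 1 V₀ - v 0 V₀) / V₀ = r * p 0 / V₀^2 := by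
          rw [hv1', hv0', sq]
          field_simp
          ring
        have e2 : (v 1 V₀ - V₀) / V₀ = r * p 0 / V₀^2 := by
          rw [hv1', sq]
          field_simp
          ring
        have h0 : 0 ≤ r * p 0 / V₀^2 := div_nonneg (mul_nonneg hr (hp 0)) (sq_nonneg _)
        simp only [Nat.sub_self] at *
        rw [d0, d1, e1, e2]
        refine ⟨by linarith, by linarith, by linarith, by linarith⟩
      · -- j = m + 2
        obtain ⟨ha, hb, hc, hd⟩ := ih (by omega) (by omega)
        have hm1N : m + 1 ≤ N := by omega
        have hpos := (key V₀ hV₀ (m+1) hm1N).1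
        have hgeV := (key V₀ hV₀ (m+1) hm1N).2.1
        -- 0 ≤ u_{m+1}
        have hle2' : v (m+1) V₀ ≤ 2 * V₀ := hle2 (m+1) hm1N
        have hnn : 0 ≤ deriv (v (m+1)) V₀ := by
          have : (v (m+1) V₀ - V₀) / V₀ ≤ 1 := by
            rw [div_le_one hV₀]; linarith
          linarith
        have hrec' := hrec (m+1) (by omega) (by omega) V₀ hV₀
        have hdrec := drec (m+1) (by omega) (by omega)
        simp only [Nat.add_sub_cancel] at hrec' hdrec ha hb ⊢
        set u1 := deriv (v (m+1)) V₀ with hu1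
        set u2 := deriv (v (m+2)) V₀ with hu2
        set u0 := deriv (v m) V₀ with hu0
        -- key term bounds
        have ht1 : 0 ≤ r * p (m+1) * u1 / (v (m+1) V₀)^2 :=
          div_nonneg (mul_nonneg (mul_nonneg hr (hp (m+1))) hnn) (sq_nonneg _)
        have ht2 : r * p (m+1) * u1 / (v (m+1) V₀)^2
            ≤ r * p (m+1) / (v (m+1) V₀)^2 := by
          apply div_le_div_of_nonneg_right _ (by positivity)
          nlinarith [mul_nonneg hr (hp (m+1))]
        have ht3 : r * p (m+1) / (v (m+1) V₀)^2
            ≤ (r * p (m+1) / v (m+1) V₀) / V₀ := by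
          rw [div_div, pow_two]
          apply div_le_div_of_nonneg_left (mul_nonneg hr (hp (m+1))) (by positivity)
          exact mul_le_mul_of_nonneg_left hgeV hpos.le
        -- (a')
        have ha' : u2 ≤ u1 := by rw [hdrec]; linarith
        refine ⟨ha', ?_, le_trans ha' hc, ?_⟩
        · -- (b')
          have hstep : (v (m+2) V₀ - v (m+1) V₀) / V₀
              = (v (m+1) V₀ - v m V₀) / V₀ + (r * p (m+1) / v (m+1) V₀) / V₀ := by
            rw [← add_div, hrec']
            ring_nf
          rw [hstep, hdrec]
          linarith
        · -- (d')
          have hstep2 : (v (m+2) V₀ - V₀) / V₀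
              = (v (m+1) V₀ - V₀) / V₀ + (v (m+2) V₀ - v (m+1) V₀) / V₀ := by
            rw [← add_div]; ring_nf
          have hb' : u1 - u2 ≤ (v (m+2) V₀ - v (m+1) V₀) / V₀ := by
            have hstep : (v (m+2) V₀ - v (m+1) V₀) / V₀
                = (v (m+1) V₀ - v m V₀) / V₀ + (r * p (m+1) / v (m+1) V₀) / V₀ := by
              rw [← add_div, hrec']
              ring_nf
            rw [hstep, hdrec]
            linarith
          rw [hstep2]
          linarith
  intro j hj
  rcases Nat.eq_zero_or_pos j with h0 | h1
  · subst h0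
    rw [d0]
    exact ⟨zero_le_one, le_refl 1⟩
  · obtain ⟨-, -, hc, hd⟩ := main j h1 hj
    refine ⟨?_, hc⟩
    have : (v j V₀ - V₀) / V₀ ≤ 1 := by
      rw [div_le_one hV₀]
      linarith [hle2 j hj]
    linarith
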